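/- Let g ∈ Aut(T) be hyperbolic and let w be a point of T. Suppose [v0, w] ∩ γ(g) is a segment [x, y] with x ≠ y, where x = proj_{γ(g)}(v0) and y = proj_{γ(g)}(w), and suppose g translates y towards x (i.e., g·y and x lie in the same connected component of γ(g) ∖ {y}). Then: d(v0, w) > d(v0, g·w) if 2·d(x, y) > l(g); d(v0, w) = d(v0, g·w) if 2·d(x, y) = l(g); and d(v0, w) < d(v0, g·w) if 2·d(x, y) < l(g). -/

import Mathlib

noncomputable section

open Pointwise

namespace TreePaper

variable {V : Type*}

section Defs

variable (T : SimpleGraph V) (v0 : V)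

/-- The vertex set of the geodesic segment `[u, w]` in the tree `T`. -/
def seg (u w : V) : Set V := {x | T.dist u x + T.dist x w = T.dist u w}

/-- `|g| = d(v0, g·v0)`. -/
def nrm (g : T ≃g T) : ℕ := T.dist v0 (g v0)

/-- `δ(g, h) = (|g| + |h| - |g⁻¹h|)/2`, as a rational number. -/
noncomputable def dlt (g h : T ≃g T) : ℚ :=
  ((nrm T v0 g : ℚ) + (nrm T v0 h : ℚ) - (nrm T v0 (g⁻¹ * h) : ℚ)) / 2

/-- An automorphism is elliptic if it fixes a vertex or inverts an edge. -/
def IsElliptic (g : T ≃g T) : Prop :=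
  (∃ v : V, g v = v) ∨ (∃ u w : V, T.Adj u w ∧ g u = w ∧ g w = u)

/-- Hyperbolic = not elliptic. -/
def IsHyperbolic (g : T ≃g T) : Prop := ¬ IsElliptic T g

/-- Translation length: the minimum of `d(v, g·v)` over all vertices `v`. -/
noncomputable def tl (g : T ≃g T) : ℕ := sInf (Set.range fun v : V => T.dist v (g v))

/-- The (vertex set of the) axis of `g`: vertices moved exactly the translation length. -/
def axisSet (g : T ≃g T) : Set V := {v : V | T.dist v (g v) = tl T g}

/-- A subgroup is purely hyperbolic if every nontrivial element is hyperbolic. -/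
def PurelyHyperbolic (G : Subgroup (T ≃g T)) : Prop :=
  ∀ g ∈ G, g ≠ 1 → IsHyperbolic T g

/-- `X^± = X ∪ X⁻¹`. -/
def Xpm (X : Set (T ≃g T)) : Set (T ≃g T) := X ∪ X⁻¹

/-- Condition N1: `X ∩ X⁻¹ = ∅`. -/
def N1 (X : Set (T ≃g T)) : Prop := X ∩ X⁻¹ = ∅

/-- Condition N2: `|xy| ≥ max (|x|, |y|)` for `x, y ∈ X^±` with `x ≠ y⁻¹`. -/
def N2 (X : Set (T ≃g T)) : Prop :=
  ∀ x ∈ Xpm T X, ∀ y ∈ Xpm T X, x ≠ y⁻¹ →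
    max (nrm T v0 x) (nrm T v0 y) ≤ nrm T v0 (x * y)

/-- Condition N3: `|xyz| > |x| + |z| - |y|` for suitable `x, y, z ∈ X^±`. -/
def N3 (X : Set (T ≃g T)) : Prop :=
  ∀ x ∈ Xpm T X, ∀ y ∈ Xpm T X, ∀ z ∈ Xpm T X, x ≠ y⁻¹ → y ≠ z⁻¹ →
    (nrm T v0 x : ℤ) + (nrm T v0 z : ℤ) - (nrm T v0 y : ℤ) < (nrm T v0 (x * y * z) : ℤ)

/-- Condition N2′: `2δ(x⁻¹, y) ≤ min (|x|, |y|)`. -/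
noncomputable def N2' (X : Set (T ≃g T)) : Prop :=
  ∀ x ∈ Xpm T X, ∀ y ∈ Xpm T X, x ≠ y⁻¹ →
    2 * dlt T v0 x⁻¹ y ≤ min (nrm T v0 x : ℚ) (nrm T v0 y : ℚ)

/-- Condition N3′: `δ(x⁻¹, y) + δ(y⁻¹, z) < |y|`. -/
noncomputable def N3' (X : Set (T ≃g T)) : Prop :=
  ∀ x ∈ Xpm T X, ∀ y ∈ Xpm T X, ∀ z ∈ Xpm T X, x ≠ y⁻¹ → y ≠ z⁻¹ →
    dlt T v0 x⁻¹ y + dlt T v0 y⁻¹ z < (nrm T v0 y : ℚ)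

/-- `X` is N-reduced: no nontrivial elliptic elements, and N1, N2, N3 hold. -/
def NReduced (X : Set (T ≃g T)) : Prop :=
  (∀ x ∈ X, x ≠ 1 → ¬ IsElliptic T x) ∧ N1 T X ∧ N2 T v0 X ∧ N3 T v0 X

/-- `H(g)`: the vertex set of the initial segment of `[v0, g·v0]` of length `⌊|g|/2⌋`. -/
def halfSet (g : T ≃g T) : Set V :=
  {x : V | x ∈ seg T v0 (g v0) ∧ T.dist v0 x ≤ nrm T v0 g / 2}

/-- The endpoint of `H(g)`: the vertex on `[v0, g·v0]` at distance `⌊|g|/2⌋` from `v0`.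
(Since paths in a tree starting at `v0` are uniquely determined by their endpoints, we
identify the path `H(g)` with this vertex.) -/
noncomputable def halfVertex (g : T ≃g T) : V :=
  letI := Classical.dec (∃ m, m ∈ seg T v0 (g v0) ∧ T.dist v0 m = nrm T v0 g / 2)
  if h : ∃ m, m ∈ seg T v0 (g v0) ∧ T.dist v0 m = nrm T v0 g / 2 then h.choose else v0

/-- `X` is a free basis of `⟨X⟩`: the homomorphism from the free group on `X` induced
by the inclusion is an isomorphism onto `⟨X⟩`. -/
def IsFreeBasis (X : Set (T ≃g T)) : Prop :=
  Function.Injective (FreeGroup.lift (fun x : X => (x : T ≃g T))) ∧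
  MonoidHom.range (FreeGroup.lift (fun x : X => (x : T ≃g T))) = Subgroup.closure X

/-- A subgroup of `Aut T` is discrete iff some finite set of vertices has trivial
pointwise stabilizer. -/
def IsDiscrete (G : Subgroup (T ≃g T)) : Prop :=
  ∃ F : Finset V, ∀ g ∈ G, (∀ v ∈ F, g v = v) → g = 1

end Defs

section Order

variable (T : SimpleGraph V) (v0 : V)

/-- The assumed properties of the chosen well-ordering of paths starting at `v0`
(paths from `v0` are identified with their endpoints): it is a well-order, shorter
paths precede longer paths, and it is lexicographic. -/
structure IsPathOrder (lt : V → V → Prop) : Prop where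
  wellOrder : IsWellOrder V lt
  short : ∀ u w : V, T.dist v0 u < T.dist v0 w → lt u w
  lex : ∀ u w : V, T.dist v0 u = T.dist v0 w → ∀ u' w' : V,
    u' ∈ seg T v0 u → w' ∈ seg T v0 w → T.dist v0 u' = T.dist v0 w' → lt u' w' → lt u w

/-- The ordering `≺` on two-element sets of paths (identified with their endpoints):
`A ≺ B` iff `A ≠ B` and the least element of the symmetric difference lies in `A`. -/
def pairLt (lt : V → V → Prop) (A B : Set V) : Prop :=
  A ≠ B ∧ ∃ m ∈ (A \ B) ∪ (B \ A), m ∈ A ∧ ∀ x ∈ (A \ B) ∪ (B \ A), x ≠ m → lt m x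

/-- `g ≺ h` iff `|g| = |h|` and `{H(g), H(g⁻¹)} ≺ {H(h), H(h⁻¹)}`. -/
noncomputable def autPrec (lt : V → V → Prop) (g h : T ≃g T) : Prop :=
  nrm T v0 g = nrm T v0 h ∧
    pairLt lt {halfVertex T v0 g, halfVertex T v0 g⁻¹}
      {halfVertex T v0 h, halfVertex T v0 h⁻¹}

/-- `g <* h` iff `|g| < |h|` or `g ≺ h`. -/
noncomputable def autLtStar (lt : V → V → Prop) (g h : T ≃g T) : Prop :=
  nrm T v0 g < nrm T v0 h ∨ autPrec T v0 lt g h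

/-- Condition N4: `x <* xy` for all `x, y ∈ X^±` with `x ≠ y⁻¹`. -/
noncomputable def N4 (lt : V → V → Prop) (X : Set (T ≃g T)) : Prop :=
  ∀ x ∈ Xpm T X, ∀ y ∈ Xpm T X, x ≠ y⁻¹ → autLtStar T v0 lt x (x * y)

/-- `X` is strongly N-reduced (w.r.t. `v0` and `<*`): a free basis satisfying N1 and N4. -/
noncomputable def StronglyNReduced (lt : V → V → Prop) (X : Set (T ≃g T)) : Prop :=
  IsFreeBasis T X ∧ N1 T X ∧ N4 T v0 lt X

end Order

section Words

variable (T : SimpleGraph V)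

/-- The product `a₀ a₁ ⋯ a_{k-1}`. -/
def wordProd (a : ℕ → T ≃g T) (k : ℕ) : T ≃g T := ((List.range k).map a).prod

/-- The product `aᵢ a_{i+1} ⋯ a_j` (inclusive endpoints). -/
def segProd (a : ℕ → T ≃g T) (i j : ℕ) : T ≃g T := ((List.range' i (j + 1 - i)).map a).prod

/-- `a 0, …, a (n-1)` is a reduced word in `X`: each letter lies in `X^±` and no letter
is followed by its inverse. -/
def IsReducedWord (X : Set (T ≃g T)) (a : ℕ → T ≃g T) (n : ℕ) : Prop :=
  (∀ i < n, a i ∈ Xpm T X) ∧ ∀ i, i + 1 < n → a (i + 1) ≠ (a i)⁻¹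

end Words

section Geometry

variable (T : SimpleGraph V) (v0 : V)

/-- `p` is a nearest-point projection of `w` to the set `A`. -/
def NearestPt (A : Set V) (w p : V) : Prop :=
  p ∈ A ∧ ∀ z ∈ A, T.dist w p ≤ T.dist w z

/-- Distance between two sets of vertices. -/
noncomputable def setDist (A B : Set V) : ℕ :=
  sInf {n : ℕ | ∃ a ∈ A, ∃ b ∈ B, T.dist a b = n}

/-- A vertex `p` of the axis of `g` lies in the half-open interval `U_g^0`
(of radius `l(g)/2` about the projection `c` of `v0`, closed at the `<`-smaller end):
either `d(c,p) < l(g)/2`, or `d(c,p) = l(g)/2` and `p` precedes the opposite boundary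
vertex in the ordering. -/
def inU0 (lt : V → V → Prop) (g : T ≃g T) (c p : V) : Prop :=
  2 * T.dist c p < tl T g ∨
    (2 * T.dist c p = tl T g ∧
      ∀ p', p' ∈ axisSet T g → T.dist c p' = T.dist c p → p' ≠ p → lt p p')

/-- `X` admits a fundamental system: `X` has no nontrivial elliptic elements and for all
distinct `g, h ∈ X`, the projection of the axis of `h` to the axis of `g` is contained
in `U_g^0`. -/
def AdmitsFundamentalSystem (lt : V → V → Prop) (X : Set (T ≃g T)) : Prop :=
  (∀ x ∈ X, x ≠ 1 → ¬ IsElliptic T x) ∧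
  ∀ g ∈ X, ∀ h ∈ X, g ≠ h → ∀ c z p : V,
    NearestPt T (axisSet T g) v0 c → z ∈ axisSet T h →
    NearestPt T (axisSet T g) z p → inU0 T lt g c p

end Geometry


section Aux

variable {T : SimpleGraph V}

section Basic

lemma dc (u v : V) : T.dist u v = T.dist v u := SimpleGraph.dist_comm

lemma dist_tri (hc : T.Connected) (u v w : V) : T.dist u w ≤ T.dist u v + T.dist v w :=
  hc.dist_triangle

lemma dist_zero (hc : T.Connected) {u v : V} (h : T.dist u v = 0) : u = v :=
  (hc.dist_eq_zero_iff).1 h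

lemma dist_pos (hc : T.Connected) {u v : V} (h : u ≠ v) : 0 < T.dist u v :=
  hc.pos_dist_of_ne h

lemma iso_dist (hc : T.Connected) (g : T ≃g T) (u v : V) :
    T.dist (g u) (g v) = T.dist u v := by
  have key : ∀ (h : T ≃g T) (a b : V), T.dist (h a) (h b) ≤ T.dist a b := by
    intro h a b
    obtain ⟨p, hp⟩ := hc.exists_walk_length_eq_dist a b
    calc T.dist (h a) (h b) ≤ (p.map h.toHom).length := SimpleGraph.dist_le _
      _ = p.length := by simp
      _ = T.dist a b := hp
  refine le_antisymm (key g u v) ?_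
  have := key g.symm (g u) (g v)
  simpa using this

lemma seg_left (u w : V) : u ∈ seg T u w := by simp [seg]

lemma seg_right (u w : V) : w ∈ seg T u w := by simp [seg]

lemma seg_comm {u w z : V} (h : z ∈ seg T u w) : z ∈ seg T w u := by
  simp only [seg, Set.mem_setOf_eq] at h ⊢
  rw [dc w z, dc z u, dc w u]
  omega

lemma seg_map (hc : T.Connected) (g : T ≃g T) {u w z : V} (h : z ∈ seg T u w) :
    g z ∈ seg T (g u) (g w) := by
  simpa only [seg, Set.mem_setOf_eq, iso_dist hc] using h

end Basic

section Walks

open SimpleGraph Walk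

lemma support_split [DecidableEq V] (hc : T.Connected) {u w z : V} (p : T.Walk u w)
    (hp : p.length = T.dist u w) (hz : z ∈ p.support) :
    T.dist u z = (p.takeUntil z hz).length ∧ T.dist z w = (p.dropUntil z hz).length := by
  have h1 : T.dist u z ≤ (p.takeUntil z hz).length := SimpleGraph.dist_le _
  have h2 : T.dist z w ≤ (p.dropUntil z hz).length := SimpleGraph.dist_le _
  have h3 : (p.takeUntil z hz).length + (p.dropUntil z hz).length = p.length := by
    have := congrArg Walk.length (p.take_spec hz)
    rwa [Walk.length_append] at this
  have h4 : T.dist u w ≤ T.dist u z + T.dist z w := dist_tri hc u z w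
  omega

lemma mem_support_shortest [DecidableEq V] (hc : T.Connected) {u w z : V} (p : T.Walk u w)
    (hp : p.length = T.dist u w) (hz : z ∈ p.support) :
    T.dist u z + T.dist z w = T.dist u w := by
  obtain ⟨h1, h2⟩ := support_split hc p hp hz
  have h3 : (p.takeUntil z hz).length + (p.dropUntil z hz).length = p.length := by
    have := congrArg Walk.length (p.take_spec hz)
    rwa [Walk.length_append] at this
  omega

lemma seg_order (hT : T.IsTree) {u w z z' : V} (hz : z ∈ seg T u w) (hz' : z' ∈ seg T u w)
    (h : T.dist u z ≤ T.dist u z') : T.dist u z + T.dist z z' = T.dist u z' := by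
  classical
  have hc := hT.isConnected
  simp only [seg, Set.mem_setOf_eq] at hz hz'
  obtain ⟨p1, hp1⟩ := hc.exists_walk_length_eq_dist u z
  obtain ⟨p2, hp2⟩ := hc.exists_walk_length_eq_dist z w
  obtain ⟨q1, hq1⟩ := hc.exists_walk_length_eq_dist u z'
  obtain ⟨q2, hq2⟩ := hc.exists_walk_length_eq_dist z' w
  have hPlen : (p1.append p2).length = T.dist u w := by
    rw [Walk.length_append]; omega
  have hQlen : (q1.append q2).length = T.dist u w := by
    rw [Walk.length_append]; omega
  have hPpath := (p1.append p2).isPath_of_length_eq_dist hPlen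
  have hQpath := (q1.append q2).isPath_of_length_eq_dist hQlen
  have hPQ : p1.append p2 = q1.append q2 := (hT.existsUnique_path u w).unique hPpath hQpath
  have hzP : z ∈ (p1.append p2).support :=
    (Walk.mem_support_append_iff _ _).2 (Or.inl p1.end_mem_support)
  have hz'P : z' ∈ (p1.append p2).support := by
    rw [hPQ]
    exact (Walk.mem_support_append_iff _ _).2 (Or.inl q1.end_mem_support)
  obtain ⟨ht1, ht2⟩ := support_split hc _ hPlen hzP
  -- split z' into take/drop parts of the split at z
  have hz'split : z' ∈ ((p1.append p2).takeUntil z hzP).support ∨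
      z' ∈ ((p1.append p2).dropUntil z hzP).support := by
    rw [← Walk.mem_support_append_iff]
    rw [(p1.append p2).take_spec hzP]
    exact hz'P
  rcases hz'split with hcase | hcase
  · have := mem_support_shortest hc _ ht1.symm hcase
    -- T.dist u z' + T.dist z' z = T.dist u z
    have hcm : T.dist z z' = T.dist z' z := dc z z'
    omega
  · have := mem_support_shortest hc _ ht2.symm hcase
    -- T.dist z z' + T.dist z' w = T.dist z w
    omega

end Walks

section Arith

-- z between u,w and m between u,z: then m between u,w
lemma seg_trans1 (hc : T.Connected) {u w z m : V} (hz : z ∈ seg T u w) (hm : m ∈ seg T u z) :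
    m ∈ seg T u w := by
  simp only [seg, Set.mem_setOf_eq] at *
  have t1 : T.dist m w ≤ T.dist m z + T.dist z w := dist_tri hc m z w
  have t2 : T.dist u w ≤ T.dist u m + T.dist m w := dist_tri hc u m w
  omega

lemma seg_trans2 (hc : T.Connected) {u w z m : V} (hz : z ∈ seg T u w) (hm : m ∈ seg T u z) :
    z ∈ seg T m w := by
  simp only [seg, Set.mem_setOf_eq] at *
  have t1 : T.dist m w ≤ T.dist m z + T.dist z w := dist_tri hc m z w
  have t2 : T.dist u w ≤ T.dist u m + T.dist m w := dist_tri hc u m w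
  omega

-- z between u,w and m between z,w: then m between u,w
lemma seg_trans1' (hc : T.Connected) {u w z m : V} (hz : z ∈ seg T u w) (hm : m ∈ seg T z w) :
    m ∈ seg T u w := by
  simp only [seg, Set.mem_setOf_eq] at *
  have t1 : T.dist u m ≤ T.dist u z + T.dist z m := dist_tri hc u z m
  have t2 : T.dist u w ≤ T.dist u m + T.dist m w := dist_tri hc u m w
  omega

lemma seg_trans4 (hc : T.Connected) {u a m z : V} (hm : m ∈ seg T u a) (hz : z ∈ seg T m a) :
    m ∈ seg T u z := by
  simp only [seg, Set.mem_setOf_eq] at *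
  have t1 : T.dist u z ≤ T.dist u m + T.dist m z := dist_tri hc u m z
  have t2 : T.dist u a ≤ T.dist u z + T.dist z a := dist_tri hc u z a
  omega

lemma seg_order2 (hT : T.IsTree) {u w z z' : V} (hz : z ∈ seg T u w) (hz' : z' ∈ seg T u w)
    (h : T.dist u z ≤ T.dist u z') : z' ∈ seg T z w := by
  have h1 := seg_order hT hz hz' h
  simp only [seg, Set.mem_setOf_eq] at *
  omega

lemma seg_between (hT : T.IsTree) {u w z1 z2 z3 : V} (h1 : z1 ∈ seg T u w) (h2 : z2 ∈ seg T u w)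
    (h3 : z3 ∈ seg T u w) (h12 : T.dist u z1 ≤ T.dist u z2) (h23 : T.dist u z2 ≤ T.dist u z3) :
    z2 ∈ seg T z1 z3 := by
  have e12 := seg_order hT h1 h2 h12
  have e13 := seg_order hT h1 h3 (le_trans h12 h23)
  have e23 := seg_order hT h2 h3 h23
  simp only [seg, Set.mem_setOf_eq] at *
  omega

lemma seg_convex (hT : T.IsTree) {a b z z' m : V} (hz : z ∈ seg T a b) (hz' : z' ∈ seg T a b)
    (hm : m ∈ seg T z z') : m ∈ seg T a b := by
  have hc := hT.isConnected
  have main : ∀ p q : V, p ∈ seg T a b → q ∈ seg T a b → T.dist a p ≤ T.dist a q →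
      ∀ n, n ∈ seg T p q → n ∈ seg T a b := by
    intro p q hp hq hle n hn
    have h1 : q ∈ seg T p b := seg_order2 hT hp hq hle
    have h2 : n ∈ seg T p b := seg_trans1 hc h1 hn
    exact seg_trans1' hc hp h2
  rcases le_total (T.dist a z) (T.dist a z') with h | h
  · exact main z z' hz hz' h m hm
  · exact main z' z hz' hz h m (seg_comm hm)

end Arith

section Median

open SimpleGraph Walk

lemma path_len (hT : T.IsTree) {u v : V} (p : T.Walk u v) (hp : p.IsPath) :
    p.length = T.dist u v := by
  obtain ⟨q, hq⟩ := hT.isConnected.exists_walk_length_eq_dist u v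
  have hqpath := q.isPath_of_length_eq_dist hq
  rw [(hT.existsUnique_path u v).unique hp hqpath, hq]

lemma adj_dist_ne (hT : T.IsTree) (a : V) {b b' : V} (hadj : T.Adj b b') :
    T.dist a b ≠ T.dist a b' := by
  classical
  intro he
  have hc := hT.isConnected
  obtain ⟨p, hp⟩ := hc.exists_walk_length_eq_dist a b
  have hppath := p.isPath_of_length_eq_dist hp
  have hbnot : b' ∉ p.support := by
    intro hmem
    have h1 := mem_support_shortest hc p hp hmem
    have h2 : T.dist b' b = 1 := by
      rw [SimpleGraph.dist_eq_one_iff_adj]; exact hadj.symm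
    omega
  have hbnotrev : b' ∉ p.reverse.support := by
    rwa [Walk.support_reverse, List.mem_reverse]
  have hconc : (Walk.cons hadj.symm p.reverse).IsPath := hppath.reverse.cons hbnotrev
  have hlen := path_len hT _ hconc
  rw [Walk.length_cons, Walk.length_reverse] at hlen
  have hcm : T.dist b' a = T.dist a b' := dc b' a
  omega

lemma fork (hT : T.IsTree) {a b b' c : V} (hadj : T.Adj b b') (hb' : b' ∈ seg T b c)
    (hab' : T.dist a b' = T.dist a b + 1) : b ∈ seg T a c := by
  classical
  have hc := hT.isConnected
  obtain ⟨P, hP⟩ := hc.exists_walk_length_eq_dist a b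
  obtain ⟨Q, hQ⟩ := hc.exists_walk_length_eq_dist b c
  have hPpath := P.isPath_of_length_eq_dist hP
  have hQpath := Q.isPath_of_length_eq_dist hQ
  have hdisj : ∀ z ∈ P.support, z ∉ Q.support.tail := by
    intro z hzP hzQt
    have hzQ : z ∈ Q.support := List.mem_of_mem_tail hzQt
    have hzb : z ≠ b := by
      intro h
      subst h
      have : Q.support = z :: Q.support.tail := Q.support_eq_cons
      have hnd := hQpath.support_nodup
      rw [this] at hnd
      exact (List.nodup_cons.1 hnd).1 hzQt
    have e1 : T.dist a z + T.dist z b = T.dist a b := mem_support_shortest hc P hP hzP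
    have e2 : T.dist b z + T.dist z c = T.dist b c := mem_support_shortest hc Q hQ hzQ
    have hzseg : z ∈ seg T b c := e2
    have hd1 : T.dist b b' = 1 := by rw [SimpleGraph.dist_eq_one_iff_adj]; exact hadj
    have hdz : 0 < T.dist b z := dist_pos hc (fun h => hzb h.symm)
    have e3 := seg_order hT hb' hzseg (by omega)
    have t1 : T.dist a b' ≤ T.dist a z + T.dist z b' := dist_tri hc a z b'
    have hcm1 : T.dist z b' = T.dist b' z := dc z b'
    have hcm2 : T.dist z b = T.dist b z := dc z b
    omega
  have happ : (P.append Q).IsPath := by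
    rw [Walk.isPath_def, Walk.support_append, List.nodup_append]
    exact ⟨hPpath.support_nodup, hQpath.support_nodup.sublist (List.tail_sublist _),
      fun z hz z' hz' h => hdisj z hz (by subst h; exact hz')⟩
  have := path_len hT _ happ
  rw [Walk.length_append] at this
  simp only [seg, Set.mem_setOf_eq]
  omega

lemma median (hT : T.IsTree) (a b c : V) :
    ∃ m, m ∈ seg T a b ∧ m ∈ seg T a c ∧ m ∈ seg T b c := by
  have hc := hT.isConnected
  suffices h : ∀ n b c, T.dist b c = n → ∃ m, m ∈ seg T a b ∧ m ∈ seg T a c ∧ m ∈ seg T b c by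
    exact h _ b c rfl
  intro n
  induction n using Nat.strong_induction_on with
  | _ n ih =>
    intro b c hn
    rcases Nat.eq_zero_or_pos n with h0 | hpos
    · subst h0
      have hbc : b = c := dist_zero hc hn
      subst hbc
      exact ⟨b, seg_right a b, seg_right a b, seg_left b b⟩
    · obtain ⟨p, hp⟩ := hc.exists_walk_length_eq_dist b c
      rw [hn] at hp
      cases p with
      | nil => simp at hp; omega
      | @cons _ b' _ hadj q =>
        have hq : q.length = n - 1 := by
          have := hp
          rw [Walk.length_cons] at this
          omega
        have hd1 : T.dist b b' = 1 := by rw [SimpleGraph.dist_eq_one_iff_adj]; exact hadj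
        have hb'c : T.dist b' c = n - 1 := by
          have h1 : T.dist b' c ≤ n - 1 := hq ▸ SimpleGraph.dist_le q
          have h2 : T.dist b c ≤ T.dist b b' + T.dist b' c := dist_tri hc b b' c
          omega
        have hb'seg : b' ∈ seg T b c := by
          simp only [seg, Set.mem_setOf_eq]
          omega
        have hne := adj_dist_ne hT a hadj
        have htri1 : T.dist a b ≤ T.dist a b' + 1 := by
          have q1 := dist_tri hc a b' b
          have q2 : T.dist b' b = T.dist b b' := dc b' b
          omega
        have htri2 : T.dist a b' ≤ T.dist a b + 1 := by
          have := dist_tri hc a b b'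
          omega
        rcases lt_or_gt_of_ne hne with hlt | hgt
        · -- dist a b < dist a b', so dist a b' = dist a b + 1 : b is median
          have hab' : T.dist a b' = T.dist a b + 1 := by omega
          exact ⟨b, seg_right a b, fork hT hadj hb'seg hab', seg_left b c⟩
        · -- dist a b' = dist a b - 1
          obtain ⟨m, hm1, hm2, hm3⟩ := ih (n - 1) (by omega) b' c hb'c
          simp only [seg, Set.mem_setOf_eq] at hm1 hm2 hm3 ⊢
          have t1 : T.dist m b ≤ T.dist m b' + T.dist b' b := dist_tri hc m b' b
          have t2 : T.dist a b ≤ T.dist a m + T.dist m b := dist_tri hc a m b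
          have t3 : T.dist b m ≤ T.dist b b' + T.dist b' m := dist_tri hc b b' m
          have t4 : T.dist b c ≤ T.dist b m + T.dist m c := dist_tri hc b m c
          have hcm1 : T.dist b' b = T.dist b b' := dc b' b
          have hcm2 : T.dist b' m = T.dist m b' := dc b' m
          have hcm3 : T.dist b m = T.dist m b := dc b m
          refine ⟨m, by omega, hm2, by omega⟩

end Median

section Gate

lemma exists_gate (hT : T.IsTree) (u a b : V) :
    ∃ p, p ∈ seg T a b ∧ ∀ z ∈ seg T a b, T.dist u z = T.dist u p + T.dist p z := by
  have hc := hT.isConnected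
  obtain ⟨m, hm1, hm2, hm3⟩ := median hT u a b
  refine ⟨m, hm3, ?_⟩
  intro z hz
  rcases le_total (T.dist a z) (T.dist a m) with h | h
  · -- z between a and m
    have hzm : z ∈ seg T a m := by
      have := seg_order hT hz hm3 h
      simpa [seg] using this
    have hma : m ∈ seg T u a := hm1
    have hzma : z ∈ seg T m a := seg_comm hzm
    have := seg_trans4 hc hma hzma
    simpa [seg, eq_comm] using this.symm
  · have hzm : z ∈ seg T m b := seg_order2 hT hm3 hz h
    have hmb : m ∈ seg T u b := hm2
    have := seg_trans4 hc hmb hzm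
    simpa [seg, eq_comm] using this.symm

lemma bridge (hT : T.IsTree) {a b u u' p q : V} (hp : p ∈ seg T a b) (hq : q ∈ seg T a b)
    (hgp : ∀ z ∈ seg T a b, T.dist u z = T.dist u p + T.dist p z)
    (hgq : ∀ z ∈ seg T a b, T.dist u' z = T.dist u' q + T.dist q z)
    (hpq : p ≠ q) : T.dist u u' = T.dist u p + T.dist p q + T.dist q u' := by
  have hc := hT.isConnected
  obtain ⟨m, hm1, hm2, hm3⟩ := median hT u u' q
  -- hm1 : m ∈ seg u u', hm2 : m ∈ seg u q, hm3 : m ∈ seg u' q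
  have hpuq : p ∈ seg T u q := by
    have := hgp q hq
    simp only [seg, Set.mem_setOf_eq]
    omega
  have hmem2 : m ∈ seg T u q := by
    obtain ⟨m', hm'⟩ := median hT u q u'
    exact hm2
  rcases le_total (T.dist u m) (T.dist u p) with h | h
  · -- contradiction case
    exfalso
    have hps : p ∈ seg T m q := seg_order2 hT hm2 hpuq h
    have hgqp := hgq p hp
    simp only [seg, Set.mem_setOf_eq] at hm3 hps
    have t1 : T.dist u' p ≤ T.dist u' m + T.dist m p := dist_tri hc u' m p
    have hcm1 : T.dist q p = T.dist p q := dc q p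
    have hz : T.dist p q = 0 := by omega
    exact hpq (dist_zero hc hz)
  · have hmpq : m ∈ seg T p q := seg_order2 hT hpuq hm2 h
    have hmab : m ∈ seg T a b := seg_convex hT hp hq hmpq
    have hgqm := hgq m hmab
    simp only [seg, Set.mem_setOf_eq] at hm3
    have hcm1 : T.dist q m = T.dist m q := dc q m
    have hmq0 : T.dist m q = 0 := by omega
    have hmq : m = q := dist_zero hc hmq0
    subst hmq
    simp only [seg, Set.mem_setOf_eq] at hm1 hpuq
    omega

end Gate

section Auto

open SimpleGraph Walk

variable {g : T ≃g T}

lemma tl_le (g : T ≃g T) (v : V) : tl T g ≤ T.dist v (g v) := Nat.sInf_le ⟨v, rfl⟩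

lemma tl_pos (hT : T.IsTree) (hg : IsHyperbolic T g) (v : V) : 0 < tl T g := by
  rcases Nat.eq_zero_or_pos (tl T g) with h0 | h
  · exfalso
    have hne : (Set.range fun v : V => T.dist v (g v)).Nonempty := ⟨T.dist v (g v), v, rfl⟩
    obtain ⟨v', hv'⟩ := Nat.sInf_mem hne
    have hv0 : T.dist v' (g v') = 0 := by
      rw [← h0]; exact hv'
    exact hg (Or.inl ⟨v', (dist_zero hT.isConnected hv0).symm⟩)
  · exact h

lemma axis_dist {v : V} (hv : v ∈ axisSet T g) : T.dist v (g v) = tl T g := hv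

lemma axis_apply (hc : T.Connected) {v : V} (hv : v ∈ axisSet T g) : g v ∈ axisSet T g := by
  show T.dist (g v) (g (g v)) = tl T g
  rw [iso_dist hc g]; exact hv

lemma axis_symm_apply (hc : T.Connected) {v : V} (hv : v ∈ axisSet T g) :
    g.symm v ∈ axisSet T g := by
  show T.dist (g.symm v) (g (g.symm v)) = tl T g
  have h1 : T.dist (g (g.symm v)) (g v) = T.dist (g.symm v) v := iso_dist hc g _ _
  rw [g.apply_symm_apply] at h1
  rw [g.apply_symm_apply, ← h1]
  exact hv

lemma dist_getVert_le (hc : T.Connected) {u v : V} (p : T.Walk u v) (k : ℕ) :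
    T.dist u (p.getVert k) ≤ k ∧ T.dist (p.getVert k) v ≤ p.length - k := by
  induction p generalizing k with
  | nil =>
    rw [Walk.getVert_of_length_le _ (by simp)]
    simp [SimpleGraph.dist_self]
  | @cons a b c hadj q ih =>
    cases k with
    | zero =>
      rw [Walk.getVert_zero]
      exact ⟨by simp [SimpleGraph.dist_self], by simpa using SimpleGraph.dist_le (Walk.cons hadj q)⟩
    | succ k =>
      obtain ⟨ih1, ih2⟩ := ih k
      rw [Walk.getVert_cons_succ]
      constructor
      · have t := dist_tri hc a b (q.getVert k)
        have hd : T.dist a b = 1 := SimpleGraph.dist_eq_one_iff_adj.mpr hadj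
        omega
      · rw [Walk.length_cons]
        omega

lemma exists_seg_vert (hT : T.IsTree) (u w : V) (k : ℕ) (hk : k ≤ T.dist u w) :
    ∃ z, z ∈ seg T u w ∧ T.dist u z = k := by
  have hc := hT.isConnected
  obtain ⟨p, hp⟩ := hc.exists_walk_length_eq_dist u w
  obtain ⟨h1, h2⟩ := dist_getVert_le hc p k
  have tri := dist_tri hc u (p.getVert k) w
  rw [hp] at h2
  refine ⟨p.getVert k, ?_, by omega⟩
  simp only [seg, Set.mem_setOf_eq]
  omega

lemma exists_seg_edge (hT : T.IsTree) (u w : V) (k : ℕ) (hk : k < T.dist u w) :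
    ∃ z z', z ∈ seg T u w ∧ z' ∈ seg T u w ∧ T.Adj z z' ∧
      T.dist u z = k ∧ T.dist u z' = k + 1 := by
  have hc := hT.isConnected
  obtain ⟨p, hp⟩ := hc.exists_walk_length_eq_dist u w
  obtain ⟨h1, h2⟩ := dist_getVert_le hc p k
  obtain ⟨h3, h4⟩ := dist_getVert_le hc p (k + 1)
  have tri1 := dist_tri hc u (p.getVert k) w
  have tri2 := dist_tri hc u (p.getVert (k + 1)) w
  rw [hp] at h2 h4
  have hadj : T.Adj (p.getVert k) (p.getVert (k + 1)) :=
    p.adj_getVert_succ (by omega)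
  exact ⟨p.getVert k, p.getVert (k + 1), by simp only [seg, Set.mem_setOf_eq]; omega,
    by simp only [seg, Set.mem_setOf_eq]; omega, hadj, by omega, by omega⟩

lemma flip_elliptic (hT : T.IsTree) (hg : IsHyperbolic T g) {v : V}
    (hd : T.dist v (g v) = tl T g) (hfix : g (g v) = v) : False := by
  have hc := hT.isConnected
  set l := tl T g with hl
  have hlpos : 0 < l := tl_pos hT hg v
  have hgseg : ∀ z ∈ seg T v (g v), g z ∈ seg T v (g v) ∧
      T.dist v (g z) + T.dist v z = l := by
    intro z hz
    have h1 : g z ∈ seg T (g v) v := by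
      have := seg_map hc g hz
      rwa [hfix] at this
    have h2 : g z ∈ seg T v (g v) := seg_comm h1
    simp only [seg, Set.mem_setOf_eq] at h1 hz
    have e1 : T.dist (g v) (g z) = T.dist v z := iso_dist hc g v z
    have e2 : T.dist (g v) v = l := by rw [dc]; exact hd
    have e3 : T.dist (g v) (g z) = T.dist (g z) (g v) := dc _ _
    have e4 : T.dist v (g z) = T.dist (g z) v := dc _ _
    refine ⟨h2, by omega⟩
  rcases Nat.even_or_odd l with ⟨k, hk⟩ | ⟨k, hk⟩
  · obtain ⟨z, hz, hdz⟩ := exists_seg_vert hT v (g v) k (by omega)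
    obtain ⟨hgz, hsum⟩ := hgseg z hz
    have hdxz : T.dist v (g z) = k := by omega
    have h0 : T.dist z (g z) = 0 := by
      have := seg_order hT hz hgz (by omega)
      omega
    exact hg (Or.inl ⟨z, (dist_zero hc h0).symm⟩)
  · obtain ⟨z, z', hz, hz', hadj, hdz, hdz'⟩ :=
      exists_seg_edge hT v (g v) k (by omega)
    obtain ⟨hgz, hsum⟩ := hgseg z hz
    obtain ⟨hgz', hsum'⟩ := hgseg z' hz'
    have e1 : T.dist v (g z) = k + 1 := by omega
    have e2 : T.dist v (g z') = k := by omega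
    have h1 : T.dist z' (g z) = 0 := by
      have := seg_order hT hz' hgz (by omega)
      omega
    have h2 : T.dist z (g z') = 0 := by
      have := seg_order hT hz hgz' (by omega)
      omega
    exact hg (Or.inr ⟨z, z', hadj, (dist_zero hc h1).symm, (dist_zero hc h2).symm⟩)

lemma two_step (hT : T.IsTree) (hg : IsHyperbolic T g) {v : V} (hv : v ∈ axisSet T g) :
    T.dist v (g (g v)) = 2 * tl T g := by
  have hc := hT.isConnected
  set l := tl T g with hl
  have hgv : T.dist v (g v) = l := hv
  have hgv2 : T.dist (g v) (g (g v)) = l := by rw [iso_dist hc g]; exact hgv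
  obtain ⟨m, hm1, hm2, hm3⟩ := median hT v (g v) (g (g v))
  have hsm : g.symm m ∈ seg T v (g v) := by
    have h := seg_map hc g.symm hm3
    rwa [g.symm_apply_apply, g.symm_apply_apply] at h
  have hdsm : T.dist v (g.symm m) = T.dist (g v) m := by
    have h := iso_dist hc g.symm (g v) m
    rwa [g.symm_apply_apply] at h
  have hl_le : l ≤ T.dist (g.symm m) m := by
    have h := tl_le g (g.symm m)
    rwa [g.apply_symm_apply] at h
  have hBA : T.dist v m + T.dist m (g v) = l := by
    have h := hm1
    simp only [seg, Set.mem_setOf_eq] at h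
    omega
  have hB : T.dist v (g.symm m) = T.dist m (g v) := by rw [hdsm, dc]
  rcases le_total (T.dist v (g.symm m)) (T.dist v m) with hcase | hcase
  · -- g v side: m = g v
    have e := seg_order hT hsm hm1 hcase
    have hmgv : T.dist m (g v) = 0 := by
      have hcm : T.dist (g.symm m) m = T.dist m (g.symm m) := dc _ _
      omega
    have hmeq : m = g v := dist_zero hc hmgv
    subst hmeq
    simp only [seg, Set.mem_setOf_eq] at hm2
    omega
  · have e := seg_order hT hm1 hsm hcase
    have hcm : T.dist (g.symm m) m = T.dist m (g.symm m) := dc _ _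
    have hvm : T.dist v m = 0 := by omega
    have hmv : v = m := dist_zero hc hvm
    subst hmv
    simp only [seg, Set.mem_setOf_eq] at hm3
    have hcb : T.dist (g v) v = l := by rw [dc]; exact hgv
    have h0 : T.dist v (g (g v)) = 0 := by omega
    exact (flip_elliptic hT hg hgv (dist_zero hc h0).symm).elim

end Auto

section Chain

variable {g : T ≃g T}

lemma seg_axis (hT : T.IsTree) (hg : IsHyperbolic T g) {v z : V} (hv : v ∈ axisSet T g)
    (hz : z ∈ seg T v (g v)) : z ∈ axisSet T g := by
  have hc := hT.isConnected
  set l := tl T g with hl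
  have hgv : T.dist v (g v) = l := hv
  have hgv2 : T.dist (g v) (g (g v)) = l := by rw [iso_dist hc g]; exact hgv
  have h2 := two_step hT hg hv
  have hgvseg : g v ∈ seg T v (g (g v)) := by
    simp only [seg, Set.mem_setOf_eq]; omega
  have hz2 : z ∈ seg T v (g (g v)) := seg_trans1 hc hgvseg hz
  have hgz : g z ∈ seg T (g v) (g (g v)) := seg_map hc g hz
  have hgz2 : z ∈ seg T v (g v) := hz
  have hgvz : g v ∈ seg T v (g z) := seg_trans4 hc hgvseg hgz
  have hgzseg : g z ∈ seg T v (g (g v)) := seg_trans1' hc hgvseg hgz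
  have e1 : T.dist (g v) (g z) = T.dist v z := iso_dist hc g v z
  have hdvz : T.dist v z ≤ T.dist v (g z) := by
    simp only [seg, Set.mem_setOf_eq] at hgvz
    omega
  have e := seg_order hT hz2 hgzseg hdvz
  show T.dist z (g z) = l
  simp only [seg, Set.mem_setOf_eq] at hgvz
  omega

lemma chain (hT : T.IsTree) (hg : IsHyperbolic T g) {b : V} (hb : b ∈ axisSet T g) :
    ∀ n, T.dist b ((⇑g)^[n] b) = n * tl T g ∧ (⇑g)^[n] b ∈ axisSet T g ∧
      (⇑g)^[n] b ∈ seg T b ((⇑g)^[n+1] b) := by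
  have hc := hT.isConnected
  set l := tl T g with hl
  intro n
  induction n with
  | zero =>
    refine ⟨by simp [SimpleGraph.dist_self], by simpa using hb, ?_⟩
    simpa using seg_left b ((⇑g)^[1] b)
  | succ n ih =>
    obtain ⟨hd, haxis, hseg⟩ := ih
    have hstep : ∀ k, (⇑g)^[k+1] b = g ((⇑g)^[k] b) := fun k => Function.iterate_succ_apply' _ _ _
    have hax1 : (⇑g)^[n+1] b ∈ axisSet T g := by
      rw [hstep n]; exact axis_apply hc haxis
    have hdist : T.dist ((⇑g)^[n] b) ((⇑g)^[n+1] b) = l := by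
      rw [hstep n]; exact haxis
    have hd' : T.dist b ((⇑g)^[n+1] b) = (n+1) * l := by
      have h := hseg
      simp only [seg, Set.mem_setOf_eq] at h
      have : (n+1) * l = n * l + l := by ring
      omega
    refine ⟨hd', hax1, ?_⟩
    have hmul : (n+1) * l = n * l + l := by ring
    obtain ⟨m, hm1, hm2, hm3⟩ := median hT b ((⇑g)^[n+1] b) ((⇑g)^[n+2] b)
    have h2 : T.dist ((⇑g)^[n] b) ((⇑g)^[n+2] b) = 2 * l := by
      have := two_step hT hg haxis
      rw [show (⇑g)^[n+2] b = g (g ((⇑g)^[n] b)) by rw [← hstep n, ← hstep (n+1)]]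
      exact this
    have hdist2 : T.dist ((⇑g)^[n+1] b) ((⇑g)^[n+2] b) = l := by
      rw [hstep (n+1)]; exact hax1
    have hmid : (⇑g)^[n+1] b ∈ seg T ((⇑g)^[n] b) ((⇑g)^[n+2] b) := by
      simp only [seg, Set.mem_setOf_eq]; omega
    -- position of m
    have ht : T.dist m ((⇑g)^[n+1] b) ≤ l := by
      have h := hm3
      simp only [seg, Set.mem_setOf_eq] at h
      have hcm : T.dist ((⇑g)^[n+1] b) m = T.dist m ((⇑g)^[n+1] b) := dc _ _
      omega
    have hposm : T.dist b m + T.dist m ((⇑g)^[n+1] b) = (n+1) * l := by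
      have h := hm1
      simp only [seg, Set.mem_setOf_eq] at h
      omega
    have hcnm : T.dist b ((⇑g)^[n] b) ≤ T.dist b m := by omega
    have hmord : m ∈ seg T ((⇑g)^[n] b) ((⇑g)^[n+1] b) := seg_order2 hT hseg hm1 hcnm
    have htrans : (⇑g)^[n+1] b ∈ seg T m ((⇑g)^[n+2] b) := seg_trans2 hc hmid hmord
    have ht0 : T.dist m ((⇑g)^[n+1] b) = 0 := by
      have ha := htrans
      have hb3 := hm3
      simp only [seg, Set.mem_setOf_eq] at ha hb3
      have hcm : T.dist ((⇑g)^[n+1] b) m = T.dist m ((⇑g)^[n+1] b) := dc _ _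
      omega
    have hmeq : m = (⇑g)^[n+1] b := dist_zero hc ht0
    subst hmeq
    exact hm2

lemma chain_mem (hT : T.IsTree) (hg : IsHyperbolic T g) {b : V} (hb : b ∈ axisSet T g) :
    ∀ i n, i ≤ n → (⇑g)^[i] b ∈ seg T b ((⇑g)^[n] b) := by
  intro i n hin
  induction n with
  | zero =>
    have : i = 0 := by omega
    subst this
    simpa using seg_left b b
  | succ n ihn =>
    rcases Nat.lt_or_ge i (n+1) with h | h
    · have h1 := ihn (by omega)
      have h2 := (chain hT hg hb n).2.2
      exact seg_trans1 hT.isConnected h2 h1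
    · have : i = n + 1 := by omega
      subst this
      exact seg_right b _

end Chain

section Coords

variable {g : T ≃g T}

lemma axis_coords (hT : T.IsTree) (hg : IsHyperbolic T g) {x y : V}
    (hxax : x ∈ axisSet T g) (hyax : y ∈ axisSet T g) (hxy : x ≠ y) :
    ∃ a t : V, (∀ z ∈ seg T a t, z ∈ axisSet T g) ∧
      x ∈ seg T a t ∧ y ∈ seg T a t ∧ g y ∈ seg T a t ∧
      T.dist a (g y) = T.dist a y + tl T g := by
  have hc := hT.isConnected
  set l := tl T g with hldef
  have hl : 0 < l := tl_pos hT hg y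
  set r := T.dist x y with hrdef
  have hr : 0 < r := dist_pos hc hxy
  set J := 2 * r + 3 * l with hJdef
  set TT := 2 * J with hTTdef
  set b := (⇑g.symm)^[J] y with hbdef
  have hbax : b ∈ axisSet T g := by
    rw [hbdef]
    have : ∀ n, (⇑g.symm)^[n] y ∈ axisSet T g := by
      intro n
      induction n with
      | zero => simpa using hyax
      | succ n ih =>
        rw [Function.iterate_succ_apply']
        exact axis_symm_apply hc ih
    exact this J
  set c : ℕ → V := fun n => (⇑g)^[n] b with hcdef
  have hstep : ∀ k, c (k+1) = g (c k) := fun k => Function.iterate_succ_apply' _ _ _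
  have hcy : c J = y := by
    have hli : Function.LeftInverse ⇑g ⇑g.symm := fun v => g.apply_symm_apply v
    exact (hli.iterate J) y
  have hchain := chain hT hg hbax
  have hcseg := chain_mem hT hg hbax
  have hcd : ∀ n, T.dist b (c n) = n * l := fun n => (hchain n).1
  have hcax : ∀ n, c n ∈ axisSet T g := fun n => (hchain n).2.1
  -- membership in the big segment
  have hZax : ∀ z ∈ seg T b (c TT), z ∈ axisSet T g := by
    intro z hzZ
    have hρle : T.dist b z ≤ TT * l := by
      have h := hzZ; simp only [seg, Set.mem_setOf_eq] at h
      have h2 := hcd TT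
      omega
    obtain ⟨i, hi1, hi2, hi3⟩ : ∃ i, i * l ≤ T.dist b z ∧ T.dist b z ≤ (i+1) * l ∧ i + 1 ≤ TT := by
      set ρ := T.dist b z with hρ
      rcases le_or_gt (ρ / l) (TT - 1) with hcase | hcase
      · refine ⟨ρ / l, Nat.div_mul_le_self ρ l, ?_, by omega⟩
        have hdm := Nat.div_add_mod ρ l
        have hmod := Nat.mod_lt ρ hl
        have hcomm : l * (ρ / l) = (ρ / l) * l := Nat.mul_comm _ _
        have hmul : (ρ / l + 1) * l = (ρ / l) * l + l := by ring
        omega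
      · have hge : TT ≤ ρ / l := by omega
        have h1 : TT * l ≤ (ρ / l) * l := Nat.mul_le_mul_right l hge
        have h2 := Nat.div_mul_le_self ρ l
        have heq : ρ = TT * l := by omega
        refine ⟨TT - 1, ?_, ?_, by omega⟩
        · have : (TT - 1) * l ≤ TT * l := Nat.mul_le_mul_right l (by omega)
          omega
        · have : TT - 1 + 1 = TT := by omega
          rw [this]; omega
    have hz' : z ∈ seg T (c i) (c (i+1)) := by
      refine seg_between hT (hcseg i TT (by omega)) hzZ (hcseg (i+1) TT hi3) ?_ ?_
      · rw [hcd i]; exact hi1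
      · rw [hcd (i+1)]; exact hi2
    rw [hstep i] at hz'
    exact seg_axis hT hg (hcax i) hz'
  -- basic index facts
  have hJ3 : 3 ≤ J := by omega
  have hJTT : J + 1 ≤ TT - 1 := by omega
  have hTT2 : 2 ≤ TT := by omega
  -- position facts
  have hyZ : y ∈ seg T b (c TT) := by rw [← hcy]; exact hcseg J TT (by omega)
  have hgyc : g y = c (J+1) := by rw [hstep J, hcy]
  have hgyZ : g y ∈ seg T b (c TT) := by rw [hgyc]; exact hcseg (J+1) TT (by omega)
  -- now Claim A : x ∈ seg b (c TT)
  -- work with the inner window W = seg (c 1) (c (TT-1))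
  have hWsubZ : ∀ z ∈ seg T (c 1) (c (TT-1)), z ∈ seg T b (c TT) := by
    intro z hz
    have h1 : c 1 ∈ seg T b (c (TT-1)) := hcseg 1 (TT-1) (by omega)
    have h2 : z ∈ seg T b (c (TT-1)) := seg_trans1' hc h1 hz
    exact seg_trans1 hc (hcseg (TT-1) TT (by omega)) h2
  -- position equations within the big segment
  have hpos : ∀ z ∈ seg T b (c TT), ∀ i, i ≤ TT →
      (T.dist b z + T.dist z (c i) = i * l ∨ i * l + T.dist (c i) z = T.dist b z) := by
    intro z hz i hi
    have hciZ : c i ∈ seg T b (c TT) := hcseg i TT hi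
    rcases le_total (T.dist b z) (T.dist b (c i)) with h | h
    · left
      have := seg_order hT hz hciZ h
      rw [hcd i] at this
      omega
    · right
      have := seg_order hT hciZ hz h
      rw [hcd i] at this
      omega
  -- y inside the window W = seg (c 1) (c (TT-1))
  have hJl : J ≤ J * l := Nat.le_mul_of_pos_right J hl
  have hyW : y ∈ seg T (c 1) (c (TT-1)) := by
    rw [← hcy]
    refine seg_between hT (hcseg 1 TT (by omega)) (hcseg J TT (by omega))
      (hcseg (TT-1) TT (by omega)) ?_ ?_
    · rw [hcd 1, hcd J]; exact Nat.mul_le_mul_right l (by omega)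
    · rw [hcd J, hcd (TT-1)]; exact Nat.mul_le_mul_right l (by omega)
  obtain ⟨p, hpW, hpgate⟩ := exists_gate hT x (c 1) (c (TT-1))
  have hpZ : p ∈ seg T b (c TT) := hWsubZ p hpW
  have hdxp_y : T.dist x p + T.dist p y = r := by
    have h := hpgate y hyW
    omega
  have hpJ := hpos p hpZ J (by omega)
  rw [hcy] at hpJ
  have hpyc : T.dist y p = T.dist p y := dc _ _
  have hbp_lb : J * l ≤ T.dist b p + r := by omega
  have hbp_ub : T.dist b p ≤ J * l + r := by omega
  have hc0 : c 0 = b := Function.iterate_zero_apply _ _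
  have hgb : g b = c 1 := by rw [hstep 0, hc0]
  have hgbp : T.dist (c 1) (g p) = T.dist b p := by
    have h := iso_dist hc g b p
    rw [hgb] at h
    exact h
  -- g p is in W, at position (d b p) + l
  have hgpW' : g p ∈ seg T (c 2) (c TT) := by
    have h := seg_map hc g hpW
    rw [show g (c 1) = c 2 from (hstep 1).symm,
      show g (c (TT-1)) = c TT from by
        rw [← hstep (TT-1)]
        congr 1
        omega] at h
    exact h
  have hgpZ : g p ∈ seg T b (c TT) := seg_trans1' hc (hcseg 2 TT (by omega)) hgpW'
  have hbgp2 : T.dist b (g p) = l + T.dist b p := by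
    have h := hpos (g p) hgpZ 1 (by omega)
    have hcm : T.dist (g p) (c 1) = T.dist (c 1) (g p) := dc _ _
    have hone : (1:ℕ) * l = l := one_mul l
    omega
  have hrl : r ≤ r * l := Nat.le_mul_of_pos_right r hl
  have hups : (J + 1 + r) * l ≤ (TT - 1) * l := Nat.mul_le_mul_right l (by omega)
  have hups2 : (J + 1 + r) * l = J * l + l + r * l := by ring
  have hgpW : g p ∈ seg T (c 1) (c (TT-1)) := by
    refine seg_between hT (hcseg 1 TT (by omega)) hgpZ (hcseg (TT-1) TT (by omega)) ?_ ?_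
    · rw [hcd 1]; omega
    · rw [hcd (TT-1)]; omega
  have hZub : T.dist b (c TT) = TT * l := hcd TT
  have hTTl : (TT - 1) * l + l = TT * l := by
    have h : TT - 1 + 1 = TT := by omega
    calc (TT-1)*l + l = (TT-1+1)*l := by ring
    _ = TT*l := by rw [h]
  -- minimality of g p for g x over W
  have hgxgp : T.dist (g x) (g p) = T.dist x p := iso_dist hc g x p
  have hmin : ∀ z ∈ seg T (c 1) (c (TT-1)), T.dist (g x) (g p) ≤ T.dist (g x) z := by
    intro z hzW
    have hzZ := hWsubZ z hzW
    have hgxz : T.dist (g x) z = T.dist x (g.symm z) := by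
      have h := iso_dist hc g x (g.symm z)
      rw [g.apply_symm_apply] at h
      exact h
    have hzTT : T.dist b z ≤ TT * l := by
      have h := hzZ; simp only [seg, Set.mem_setOf_eq] at h
      omega
    rcases le_or_gt (2*l) (T.dist b z) with hfar | hnear
    · have h1 : g.symm z ∈ seg T b (c (TT-2)) := by
        have h := seg_map hc g.symm hzW
        rw [show g.symm (c 1) = b from by rw [hstep 0, g.symm_apply_apply, hc0],
          show g.symm (c (TT-1)) = c (TT-2) from by
            rw [show TT - 1 = (TT-2)+1 by omega, hstep (TT-2), g.symm_apply_apply]] at h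
        exact h
      have h2 : g.symm z ∈ seg T b (c TT) := seg_trans1 hc (hcseg (TT-2) TT (by omega)) h1
      have h3 : T.dist b (g.symm z) = T.dist (c 1) z := by
        have h := iso_dist hc g b (g.symm z)
        rw [hgb, g.apply_symm_apply] at h
        exact h.symm
      have h4 : l + T.dist (c 1) z = T.dist b z := by
        have h := hpos z hzZ 1 (by omega)
        have hcm : T.dist z (c 1) = T.dist (c 1) z := dc _ _
        have hone : (1:ℕ) * l = l := one_mul l
        omega
      have h5 : g.symm z ∈ seg T (c 1) (c (TT-1)) := by
        refine seg_between hT (hcseg 1 TT (by omega)) h2 (hcseg (TT-1) TT (by omega)) ?_ ?_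
        · rw [hcd 1]; omega
        · rw [hcd (TT-1)]; omega
      have h6 := hpgate (g.symm z) h5
      omega
    · have hpz := hpos z hzZ J (by omega)
      rw [hcy] at hpz
      have hzy : T.dist z y ≥ J * l - 2 * l := by
        have hcm : T.dist y z = T.dist z y := dc _ _
        rcases hpz with h | h
        · omega
        · omega
      have tri1 : T.dist y z ≤ T.dist y (g x) + T.dist (g x) z := dist_tri hc _ _ _
      have tri2 : T.dist y (g x) ≤ T.dist y (g y) + T.dist (g y) (g x) := dist_tri hc _ _ _
      have e1 : T.dist y (g y) = l := hyax
      have e2 : T.dist (g y) (g x) = T.dist y x := iso_dist hc g y x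
      have e3 : T.dist y x = T.dist x y := dc _ _
      have e4 : T.dist y z = T.dist z y := dc _ _
      omega
  obtain ⟨q, hqW, hqgate⟩ := exists_gate hT (g x) (c 1) (c (TT-1))
  have hq1 := hqgate (g p) hgpW
  have hq2 := hmin q hqW
  have hqgp : q = g p := dist_zero hc (by omega)
  subst hqgp
  have hppos : T.dist b p ≤ T.dist b (g p) := by omega
  have hpgp : T.dist p (g p) = l := by
    have h := seg_order hT hpZ hgpZ hppos
    omega
  have hpnegp : p ≠ g p := by
    intro h
    rw [← h, SimpleGraph.dist_self] at hpgp
    omega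
  have hbr := bridge hT hpW hgpW hpgate hqgate hpnegp
  have hxgx : T.dist x (g x) = l := hxax
  have hgpgx : T.dist (g p) (g x) = T.dist x p := by
    rw [iso_dist hc g p x]; exact dc _ _
  have hxp : x = p := dist_zero hc (by omega)
  have hxZ : x ∈ seg T b (c TT) := by rw [hxp]; exact hpZ
  refine ⟨b, c TT, hZax, hxZ, hyZ, hgyZ, ?_⟩
  rw [show T.dist b y = J * l from by rw [← hcy]; exact hcd J,
    show T.dist b (g y) = (J+1) * l from by rw [hgyc]; exact hcd (J+1)]
  ring

end Coords


end Aux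

/-- comparison of d(v0, w) and d(v0, g·w) according to the overlap
of [v0, w] with the axis of g, when g translates the overlap towards v0. -/
theorem statement_15 {V : Type*} (T : SimpleGraph V) (hT : T.IsTree) (v0 : V)
    (g : T ≃g T) (hg : IsHyperbolic T g) (w x y : V)
    (hx : NearestPt T (axisSet T g) v0 x)
    (hy : NearestPt T (axisSet T g) w y)
    (hxy : x ≠ y)
    (hseg : seg T v0 w ∩ axisSet T g = seg T x y)
    (htoward : y ∉ seg T (g y) x) :
    (tl T g < 2 * T.dist x y → T.dist v0 (g w) < T.dist v0 w) ∧
    (2 * T.dist x y = tl T g → T.dist v0 w = T.dist v0 (g w)) ∧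
    (2 * T.dist x y < tl T g → T.dist v0 w < T.dist v0 (g w)) := by
  have hc := hT.isConnected
  set l := tl T g with hldef
  set r := T.dist x y with hrdef
  have hl : 0 < l := tl_pos hT hg y
  have hr : 0 < r := dist_pos hc hxy
  have hxax : x ∈ axisSet T g := hx.1
  have hyax : y ∈ axisSet T g := hy.1
  obtain ⟨a, t, hZax, hxZ, hyZ, hgyZ, hgy_pos⟩ := axis_coords hT hg hxax hyax hxy
  -- the gate of v0 on [a,t] is x
  obtain ⟨p0, hp0, hp0gate⟩ := exists_gate hT v0 a t
  have h1 : T.dist v0 x ≤ T.dist v0 p0 := hx.2 p0 (hZax p0 hp0)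
  have h2 : T.dist v0 x = T.dist v0 p0 + T.dist p0 x := hp0gate x hxZ
  have hp0x : x = p0 := (dist_zero hc (by omega : T.dist p0 x = 0)).symm
  subst hp0x
  -- the gate of g w on [a,t] is g y
  obtain ⟨q0, hq0, hq0gate⟩ := exists_gate hT (g w) a t
  have hgynear : ∀ z ∈ axisSet T g, T.dist (g w) (g y) ≤ T.dist (g w) z := by
    intro z hz
    have hz' : g.symm z ∈ axisSet T g := axis_symm_apply hc hz
    have h3 := hy.2 _ hz'
    have e1 : T.dist (g w) (g y) = T.dist w y := iso_dist hc g w y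
    have e2 : T.dist (g w) z = T.dist w (g.symm z) := by
      have h := iso_dist hc g w (g.symm z)
      rw [g.apply_symm_apply] at h
      exact h
    omega
  have h3 : T.dist (g w) (g y) ≤ T.dist (g w) q0 := hgynear q0 (hZax q0 hq0)
  have h4 : T.dist (g w) (g y) = T.dist (g w) q0 + T.dist q0 (g y) := hq0gate (g y) hgyZ
  have hq0gy : q0 = g y := dist_zero hc (by omega)
  rw [hq0gy] at hq0gate
  -- x and y lie on [v0, w], with x before y
  have hxseg : x ∈ seg T v0 w := by
    have hmem : x ∈ seg T v0 w ∩ axisSet T g := by rw [hseg]; exact seg_left x y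
    exact hmem.1
  have hyseg : y ∈ seg T v0 w := by
    have hmem : y ∈ seg T v0 w ∩ axisSet T g := by rw [hseg]; exact seg_right x y
    exact hmem.1
  have hvx_le : T.dist v0 x ≤ T.dist v0 y := hx.2 y hyax
  have hordD := seg_order hT hxseg hyseg hvx_le
  have hD : T.dist v0 w = T.dist v0 x + r + T.dist y w := by
    have h := hyseg; simp only [seg, Set.mem_setOf_eq] at h
    omega
  -- position of x on [a,t] : beyond y (since g translates y towards x)
  have hygyl : T.dist y (g y) = l := hyax
  have hxi : T.dist a x = T.dist a y + r := by
    rcases le_total (T.dist a x) (T.dist a y) with hcase | hcase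
    · exfalso
      have e := seg_order hT hxZ hyZ hcase
      have hle2 : T.dist a x ≤ T.dist a (g y) := by omega
      have e2 := seg_order hT hxZ hgyZ hle2
      refine htoward ?_
      simp only [seg, Set.mem_setOf_eq]
      have c1 : T.dist (g y) y = l := by rw [dc]; exact hygyl
      have c2 : T.dist y x = r := (dc y x).trans hrdef.symm
      have c3 : T.dist (g y) x = T.dist x (g y) := dc _ _
      omega
    · have e := seg_order hT hyZ hxZ hcase
      have c2 : T.dist y x = r := (dc y x).trans hrdef.symm
      omega
  -- the distance from x to g y
  have he : T.dist x (g y) + r = l ∨ T.dist x (g y) + l = r := by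
    rcases le_total (T.dist a x) (T.dist a (g y)) with hcase | hcase
    · left
      have e := seg_order hT hxZ hgyZ hcase
      omega
    · right
      have e := seg_order hT hgyZ hxZ hcase
      have c3 : T.dist (g y) x = T.dist x (g y) := dc _ _
      omega
  have hgyw : T.dist (g y) (g w) = T.dist y w := iso_dist hc g y w
  by_cases hxgy : x = g y
  · have hxgy0 : T.dist x (g y) = 0 := by rw [hxgy, SimpleGraph.dist_self]
    have hD' : T.dist v0 (g w) ≤ T.dist v0 x + T.dist y w := by
      have tri := dist_tri hc v0 x (g w)
      have hx2 : T.dist x (g w) = T.dist y w := by rw [hxgy]; exact hgyw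
      omega
    exact ⟨fun h => by omega, fun h => by omega, fun h => by omega⟩
  · have hbr := bridge hT hxZ hgyZ hp0gate hq0gate hxgy
    exact ⟨fun h => by omega, fun h => by omega, fun h => by omega⟩


end TreePaper

end
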